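/- arXiv:1604.06994 — 5 statements merged into one kernel-verified Lean document; each statement's English description precedes it below -/
import Mathlib

section
/- Let J₀, J₁ be complex structures on a finite-dimensional real inner product space, T₀ = (J₀+J₁)/2, and let v be an eigenvector of T₀ᵀT₀ with eigenvalue λ ∈ (0,1). Then w = T₁ᵀT₀ v (where T₁ = (J₀-J₁)/2) is also an eigenvector of T₀ᵀT₀ with eigenvalue λ, and ‖w‖² = λ(1-λ)‖v‖² ≠ 0. -/
/-- If `v` is an eigenvector of `T₀ᵀT₀` with eigenvalue `λ ∈ (0,1)`, where
`T₀ = (J₀+J₁)/2` for complex structures `J₀, J₁`, then `w = T₁ᵀT₀ v` with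
`T₁ = (J₀-J₁)/2` is again an eigenvector with eigenvalue `λ`, and
`‖w‖² = λ(1-λ)‖v‖² ≠ 0`. -/
theorem eigenvector_partner {H : Type*} [NormedAddCommGroup H]
    [InnerProductSpace ℝ H] [FiniteDimensional ℝ H]
    (J₀ J₁ : H →ₗ[ℝ] H)
    (h0sq : J₀ ∘ₗ J₀ = -LinearMap.id) (h0sk : LinearMap.adjoint J₀ = -J₀)
    (h1sq : J₁ ∘ₗ J₁ = -LinearMap.id) (h1sk : LinearMap.adjoint J₁ = -J₁)
    (T₀ T₁ : H →ₗ[ℝ] H)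
    (hT₀ : T₀ = (2 : ℝ)⁻¹ • (J₀ + J₁)) (hT₁ : T₁ = (2 : ℝ)⁻¹ • (J₀ - J₁))
    (lam : ℝ) (hlam0 : 0 < lam) (hlam1 : lam < 1)
    (v : H) (hv : v ≠ 0) (heig : (LinearMap.adjoint T₀ ∘ₗ T₀) v = lam • v)
    (w : H) (hw : w = (LinearMap.adjoint T₁ ∘ₗ T₀) v) :
    (LinearMap.adjoint T₀ ∘ₗ T₀) w = lam • w ∧
    ‖w‖ ^ 2 = lam * (1 - lam) * ‖v‖ ^ 2 ∧ w ≠ 0 := by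
  have hJ0 : ∀ x, J₀ (J₀ x) = -x := by
    intro x
    have := LinearMap.ext_iff.mp h0sq x
    simpa using this
  have hJ1 : ∀ x, J₁ (J₁ x) = -x := by
    intro x
    have := LinearMap.ext_iff.mp h1sq x
    simpa using this
  -- T₀ and T₁ are skew-adjoint
  have adj0 : LinearMap.adjoint T₀ = -T₀ := by
    rw [hT₀, map_smulₛₗ, map_add, h0sk, h1sk]
    simp
    module
  have adj1 : LinearMap.adjoint T₁ = -T₁ := by
    rw [hT₁, map_smulₛₗ, map_sub, h0sk, h1sk]
    simp
    module
  -- anticommutation: T₀ T₁ = - T₁ T₀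
  have hAC : ∀ x, T₀ (T₁ x) = -(T₁ (T₀ x)) := by
    intro x
    simp only [hT₀, hT₁, LinearMap.smul_apply, LinearMap.add_apply, LinearMap.sub_apply,
      map_smul, map_add, map_sub, hJ0, hJ1]
    module
  -- T₁² = -1 - T₀²
  have hSum : ∀ x, T₁ (T₁ x) = -x - T₀ (T₀ x) := by
    intro x
    simp only [hT₀, hT₁, LinearMap.smul_apply, LinearMap.add_apply, LinearMap.sub_apply,
      map_smul, map_add, map_sub, hJ0, hJ1]
    module
  -- rewrite eigen equation
  have hAv : T₀ (T₀ v) = -(lam • v) := by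
    have h := heig
    rw [LinearMap.comp_apply, adj0] at h
    simp only [LinearMap.neg_apply] at h
    linear_combination (norm := abel) -h
  have hw' : w = -(T₁ (T₀ v)) := by
    rw [hw, LinearMap.comp_apply, adj1]; simp
  set u : H := T₀ v with hu
  -- eigenvector property of w
  have hT0w : T₀ w = -(lam • T₁ v) := by
    rw [hw', map_neg, hAC, hu, hAv, map_neg, map_smul]
    all_goals simp
  have hT00w : T₀ (T₀ w) = -(lam • w) := by
    rw [hT0w, map_neg, map_smul, hAC, hw', hu]
  have goal1 : (LinearMap.adjoint T₀ ∘ₗ T₀) w = lam • w := by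
    rw [LinearMap.comp_apply, adj0, LinearMap.neg_apply, hT00w, neg_neg]
  -- norm computation
  have hnormu : ‖u‖ ^ 2 = lam * ‖v‖ ^ 2 := by
    have : (inner ℝ u u : ℝ) = inner ℝ v ((LinearMap.adjoint T₀) u) := by
      rw [LinearMap.adjoint_inner_right]
    rw [adj0] at this
    simp only [LinearMap.neg_apply] at this
    have h2 : (inner ℝ u u : ℝ) = inner ℝ v (lam • v) := by
      rw [this, hu, hAv]; simp
    rw [real_inner_self_eq_norm_sq] at h2
    rw [h2, real_inner_smul_right, real_inner_self_eq_norm_sq]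
  have hT1w : T₁ w = u - lam • u := by
    rw [hw', map_neg, hSum]
    have : T₀ (T₀ u) = -(lam • u) := by
      rw [hu]
      calc T₀ (T₀ (T₀ v)) = T₀ (-(lam • v)) := by rw [hAv]
        _ = -(lam • T₀ v) := by rw [map_neg, map_smul]
    rw [this]
    abel
  have goal2 : ‖w‖ ^ 2 = lam * (1 - lam) * ‖v‖ ^ 2 := by
    have h1 : (inner ℝ w w : ℝ) = inner ℝ u (T₁ w) := by
      rw [hw, LinearMap.comp_apply, LinearMap.adjoint_inner_left]
    rw [hT1w, inner_sub_right, real_inner_smul_right, real_inner_self_eq_norm_sq] at h1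
    rw [real_inner_self_eq_norm_sq] at h1
    rw [h1, hnormu]
    ring
  refine ⟨goal1, goal2, ?_⟩
  intro hw0
  rw [hw0, norm_zero] at goal2
  have hv' : (0:ℝ) < ‖v‖ ^ 2 := by
    have : ‖v‖ ≠ 0 := norm_ne_zero_iff.mpr hv
    positivity
  have hpos : 0 < lam * (1 - lam) * ‖v‖ ^ 2 :=
    mul_pos (mul_pos hlam0 (by linarith)) hv'
  norm_num at goal2
  rcases goal2 with (h | h) | h
  · linarith
  · linarith
  · exact hv h
end

section
/- For two complex structures J₀ and J₁ on ℝ^{2n}, the real multiplicity of every eigenvalue of (J₀+J₁)² lying in the open interval (-1,0) is divisible by 4. -/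
open scoped Quaternion

/-- If a real vector space carries two anticommuting complex structures, its
dimension is divisible by 4 (it is a quaternionic vector space). -/
lemma four_dvd_finrank_of_quaternionic {V : Type*} [AddCommGroup V] [Module ℝ V]
    (I K : Module.End ℝ V) (hI : I * I = -1) (hK : K * K = -1)
    (hIK : I * K = -(K * I)) : 4 ∣ Module.finrank ℝ V := by
  let q : QuaternionAlgebra.Basis (Module.End ℝ V) (-1 : ℝ) (0 : ℝ) (-1 : ℝ) :=
    { i := I
      j := K
      k := I * K
      i_mul_i := by rw [hI]; simp
      j_mul_j := by rw [hK]; simp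
      i_mul_j := rfl
      j_mul_i := by rw [hIK]; simp }
  letI : Module ℍ[ℝ] V := Module.compHom V q.liftHom.toRingHom
  have hsmul : ∀ (a : ℍ[ℝ]) (v : V), a • v = q.liftHom a v := fun a v => rfl
  haveI : IsScalarTower ℝ ℍ[ℝ] V := by
    constructor
    intro r a v
    rw [hsmul, hsmul]
    exact LinearMap.congr_fun (map_smul q.liftHom r a) v
  have h := Module.finrank_mul_finrank ℝ ℍ[ℝ] V
  rw [Quaternion.finrank_eq_four] at h
  exact ⟨Module.finrank ℍ[ℝ] V, h.symm⟩

set_option maxHeartbeats 1000000 in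
/-- For two complex structures `J₀, J₁` on `ℝ^{2n}`, the real multiplicity of every
eigenvalue of `(J₀+J₁)²` lying in `(-1,0)` is divisible by `4`. -/
theorem eigenspace_multiplicity_div_four (n : ℕ)
    (J₀ J₁ : EuclideanSpace ℝ (Fin (2 * n)) →ₗ[ℝ] EuclideanSpace ℝ (Fin (2 * n)))
    (h0sq : J₀ ∘ₗ J₀ = -LinearMap.id) (h0sk : LinearMap.adjoint J₀ = -J₀)
    (h1sq : J₁ ∘ₗ J₁ = -LinearMap.id) (h1sk : LinearMap.adjoint J₁ = -J₁)
    (mu : ℝ) (hmu0 : -1 < mu) (hmu1 : mu < 0) :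
    4 ∣ Module.finrank ℝ
      (Module.End.eigenspace ((J₀ + J₁) ∘ₗ (J₀ + J₁) : Module.End ℝ
        (EuclideanSpace ℝ (Fin (2 * n)))) mu) := by
  set V := EuclideanSpace ℝ (Fin (2 * n))
  set A : Module.End ℝ V := (J₀ + J₁) ∘ₗ (J₀ + J₁) with hA
  set E := Module.End.eigenspace A mu with hE
  -- pointwise squares
  have h0 : ∀ x : V, J₀ (J₀ x) = -x := fun x => by
    simpa using LinearMap.congr_fun h0sq x
  have h1 : ∀ x : V, J₁ (J₁ x) = -x := fun x => by
    simpa using LinearMap.congr_fun h1sq x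
  have hAx : ∀ x : V, A x = J₀ (J₀ x) + J₀ (J₁ x) + J₁ (J₀ x) + J₁ (J₁ x) := by
    intro x
    simp only [hA, LinearMap.comp_apply, LinearMap.add_apply, map_add]
    abel
  -- the key anticommutator identity on the eigenspace
  have key : ∀ x : V, x ∈ E → J₀ (J₁ x) + J₁ (J₀ x) = (mu + 2) • x := by
    intro x hx
    rw [hE, Module.End.mem_eigenspace_iff] at hx
    have hx' : J₀ (J₀ x) + J₀ (J₁ x) + J₁ (J₀ x) + J₁ (J₁ x) = mu • x := by
      rw [← hAx]; exact hx
    rw [h0, h1] at hx'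
    have : J₀ (J₁ x) + J₁ (J₀ x) = mu • x + x + x := by
      rw [← hx']; abel
    rw [this, add_smul, two_smul]
    abel
  -- E is invariant under J₀ and J₁
  have invar : ∀ (P Q : V →ₗ[ℝ] V), (∀ x : V, P (P x) = -x) → (∀ x : V, Q (Q x) = -x) →
      (∀ x : V, A x = P (P x) + P (Q x) + Q (P x) + Q (Q x)) →
      (∀ x : V, x ∈ E → P (Q x) + Q (P x) = (mu + 2) • x) →
      ∀ x : V, x ∈ E → P x ∈ E := by
    intro P Q hP hQ hAPQ hkey x hx
    rw [hE, Module.End.mem_eigenspace_iff]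
    have h2 : P (P (Q x)) + P (Q (P x)) = (mu + 2) • P x := by
      rw [← map_add, hkey x hx, map_smul]
    rw [hP (Q x)] at h2
    have h3 : P (Q (P x)) = (mu + 2) • P x + Q x := by
      rw [← h2]; abel
    rw [hAPQ (P x), hP (P x), hQ (P x), hP x, map_neg, h3, add_smul, two_smul]
    abel
  have hkey01 : ∀ x : V, x ∈ E → J₀ (J₁ x) + J₁ (J₀ x) = (mu + 2) • x := key
  have hkey10 : ∀ x : V, x ∈ E → J₁ (J₀ x) + J₀ (J₁ x) = (mu + 2) • x := by
    intro x hx; rw [add_comm]; exact key x hx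
  have hAx' : ∀ x : V, A x = J₁ (J₁ x) + J₁ (J₀ x) + J₀ (J₁ x) + J₀ (J₀ x) := by
    intro x; rw [hAx]; abel
  have hJ0inv : ∀ x : V, x ∈ E → J₀ x ∈ E := invar J₀ J₁ h0 h1 hAx hkey01
  have hJ1inv : ∀ x : V, x ∈ E → J₁ x ∈ E := invar J₁ J₀ h1 h0 hAx' hkey10
  -- set up constants
  set c : ℝ := (mu + 2) / 2 with hc
  have hc2 : mu + 2 = 2 * c := by rw [hc]; ring
  have hclt : c ^ 2 < 1 := by
    have h1c : c < 1 := by rw [hc]; linarith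
    have h2c : 0 < c := by rw [hc]; linarith
    nlinarith
  have hpos : 0 < 1 - c ^ 2 := by linarith
  set t : ℝ := Real.sqrt (1 - c ^ 2) with ht
  have ht2 : t ^ 2 = 1 - c ^ 2 := Real.sq_sqrt (le_of_lt hpos)
  have htpos : 0 < t := Real.sqrt_pos.mpr hpos
  have htne : t ≠ 0 := ne_of_gt htpos
  -- restricted operators
  have hKinv : ∀ x : V, x ∈ E → (J₁ + c • J₀) x ∈ E := by
    intro x hx
    simp only [LinearMap.add_apply, LinearMap.smul_apply]
    exact E.add_mem (hJ1inv x hx) (E.smul_mem c (hJ0inv x hx))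
  set I : Module.End ℝ E := J₀.restrict hJ0inv with hIdef
  set K0 : Module.End ℝ E := (J₁ + c • J₀).restrict hKinv with hK0def
  set K : Module.End ℝ E := t⁻¹ • K0 with hKdef
  have hII : I * I = -1 := by
    apply LinearMap.ext
    intro x
    apply Subtype.ext
    simp only [Module.End.mul_apply, hIdef, LinearMap.restrict_coe_apply,
      LinearMap.neg_apply, Module.End.one_apply]
    exact h0 (x : V)
  have hK0K0 : ∀ x : E, ((K0 * K0) x : V) = (c ^ 2 - 1) • (x : V) := by
    intro x
    simp only [Module.End.mul_apply, hK0def, LinearMap.restrict_coe_apply,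
      LinearMap.add_apply, LinearMap.smul_apply, map_add, map_smul]
    rw [h0, h1]
    have hk := key (x : V) x.2
    have : J₁ (J₀ (x : V)) = (mu + 2) • (x : V) - J₀ (J₁ (x : V)) := by
      rw [← hk]; abel
    rw [this, hc2]
    module
  have hval : t⁻¹ * t⁻¹ * (c ^ 2 - 1) = -1 := by
    field_simp
    nlinarith [ht2]
  have hKK : K * K = -1 := by
    apply LinearMap.ext
    intro x
    have e : (K * K) x = (t⁻¹ * t⁻¹) • ((K0 * K0) x) := by
      simp only [hKdef, Module.End.mul_apply, LinearMap.smul_apply, map_smul, smul_smul]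
    apply Subtype.ext
    rw [e, Submodule.coe_smul, hK0K0 x, smul_smul, hval]
    simp
  have hIK0 : ∀ x : E, ((I * K0) x : V) + ((K0 * I) x : V) = 0 := by
    intro x
    simp only [Module.End.mul_apply, hIdef, hK0def, LinearMap.restrict_coe_apply,
      LinearMap.add_apply, LinearMap.smul_apply, map_add, map_smul]
    rw [h0]
    have hk := key (x : V) x.2
    have h4 : J₀ (J₁ (x : V)) = (mu + 2) • (x : V) - J₁ (J₀ (x : V)) := by
      rw [← hk]; abel
    rw [h4, hc2]
    module
  have hIK : I * K = -(K * I) := by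
    apply LinearMap.ext
    intro x
    have e1 : (I * K) x = t⁻¹ • ((I * K0) x) := by
      simp only [hKdef, Module.End.mul_apply, LinearMap.smul_apply, map_smul]
    have e2 : (K * I) x = t⁻¹ • ((K0 * I) x) := by
      simp only [hKdef, Module.End.mul_apply, LinearMap.smul_apply]
    have e3 : (I * K0) x = -((K0 * I) x) := by
      apply Subtype.ext
      rw [Submodule.coe_neg]
      exact eq_neg_of_add_eq_zero_left (hIK0 x)
    rw [LinearMap.neg_apply, e1, e2, e3, smul_neg]
  exact four_dvd_finrank_of_quaternionic I K hII hKK hIK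
end

section
/- Let Q, Q' be orthogonal projections on a real Hilbert space with ‖Q - Q'‖ < ε for some ε < 1/2, and let V : ran Q → ran Q' be defined by V v = Q' v. Then V is a bijection, ‖V‖ ≤ 1, ‖V⁻¹‖ < 1+2ε, and ‖VᵀV - 1‖ < 2ε as well as ‖VVᵀ - 1‖ < 2ε. -/
open ContinuousLinearMap

set_option maxHeartbeats 2000000 in
set_option synthInstance.maxHeartbeats 400000 in
/-- If two orthogonal projections `Q, Q'` onto closed subspaces `E, E'` of a real
Hilbert space satisfy `‖Q - Q'‖ < ε < 1/2`, then the map `V : E → E'`, `V v = Q' v`,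
is a bijection with `‖V‖ ≤ 1`, `‖V⁻¹‖ < 1 + 2ε`, and
`‖VᵀV - 1‖ < 2ε`, `‖VVᵀ - 1‖ < 2ε`. -/

theorem projection_compression_isomorphism {H : Type*} [NormedAddCommGroup H]
    [InnerProductSpace ℝ H] [CompleteSpace H]
    (E E' : Submodule ℝ H) [CompleteSpace E] [CompleteSpace E']
    (ε : ℝ) (hε : ε < 1 / 2)
    (hQQ' : ‖(E.subtypeL ∘L E.orthogonalProjectionOnto : H →L[ℝ] H) -
      (E'.subtypeL ∘L E'.orthogonalProjectionOnto : H →L[ℝ] H)‖ < ε)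
    (V : E →L[ℝ] E') (hV : V = E'.orthogonalProjectionOnto ∘L E.subtypeL) :
    Function.Bijective V ∧ ‖V‖ ≤ 1 ∧
    (∃ W : E' →L[ℝ] E, W ∘L V = 1 ∧ V ∘L W = 1 ∧ ‖W‖ < 1 + 2 * ε) ∧
    ‖adjoint V ∘L V - 1‖ < 2 * ε ∧ ‖V ∘L adjoint V - 1‖ < 2 * ε := by
  set Q := (E.subtypeL ∘L E.orthogonalProjectionOnto : H →L[ℝ] H) with hQ
  set Q' := (E'.subtypeL ∘L E'.orthogonalProjectionOnto : H →L[ℝ] H) with hQ'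
  set δ := ‖Q - Q'‖ with hδdef
  have hδ0 : 0 ≤ δ := norm_nonneg _
  have hδε : δ < ε := hQQ'
  have hε0 : 0 < ε := lt_of_le_of_lt hδ0 hδε
  have hδhalf : δ < 1 / 2 := lt_trans hδε hε
  -- adjoint of V
  have hVadj : adjoint V = E.orthogonalProjectionOnto ∘L E'.subtypeL := by
    rw [hV, adjoint_comp, E.adjoint_subtypeL, E'.adjoint_orthogonalProjection]
  -- pointwise bounds for orthogonal projections
  have hPE : ∀ x : H, ‖E.orthogonalProjectionOnto x‖ ≤ ‖x‖ := fun x =>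
    le_trans ((E.orthogonalProjectionOnto).le_opNorm x)
      (mul_le_of_le_one_left (norm_nonneg x) (Submodule.orthogonalProjectionOnto_norm_le E))
  have hPE' : ∀ x : H, ‖E'.orthogonalProjectionOnto x‖ ≤ ‖x‖ := fun x =>
    le_trans ((E'.orthogonalProjectionOnto).le_opNorm x)
      (mul_le_of_le_one_left (norm_nonneg x) (Submodule.orthogonalProjectionOnto_norm_le E'))
  -- key estimates
  have keyA : ∀ v : E, ‖((V v : H)) - (v : H)‖ ≤ δ * ‖v‖ := by
    intro v
    have h1 : (Q - Q') (v : H) = (v : H) - (V v : H) := by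
      simp [hQ, hQ', hV, Submodule.orthogonalProjectionOnto_mem_subspace_eq_self]
    have := (Q - Q').le_opNorm (v : H)
    rw [h1] at this
    rw [← norm_neg]
    simpa using this
  have keyB : ∀ w : E', ‖((adjoint V w : H)) - (w : H)‖ ≤ δ * ‖w‖ := by
    intro w
    have h1 : (Q - Q') (w : H) = (adjoint V w : H) - (w : H) := by
      simp [hQ, hQ', hVadj, Submodule.orthogonalProjectionOnto_mem_subspace_eq_self]
    have := (Q - Q').le_opNorm (w : H)
    rw [h1] at this
    simpa using this
  -- ‖V‖ ≤ 1
  have hVnorm : ‖V‖ ≤ 1 := by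
    refine opNorm_le_bound V zero_le_one fun v => ?_
    rw [one_mul]
    have : ‖V v‖ = ‖(V v : H)‖ := rfl
    rw [this, hV]
    exact hPE' _
  -- ‖VᵀV - 1‖ ≤ δ
  have hAA : ‖adjoint V ∘L V - 1‖ ≤ δ := by
    refine opNorm_le_bound _ hδ0 fun v => ?_
    have h1 : ((adjoint V ∘L V - 1) v : H) = (E.orthogonalProjectionOnto ((V v : H) - (v : H)) : H) := by
      simp [hVadj, map_sub, Submodule.orthogonalProjectionOnto_mem_subspace_eq_self]
    have h2 : ‖(adjoint V ∘L V - 1) v‖ = ‖((adjoint V ∘L V - 1) v : H)‖ := rfl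
    rw [h2, h1]
    calc ‖(E.orthogonalProjectionOnto ((V v : H) - (v : H)) : H)‖
        ≤ ‖(V v : H) - (v : H)‖ := hPE _
      _ ≤ δ * ‖v‖ := keyA v
  have hBB : ‖V ∘L adjoint V - 1‖ ≤ δ := by
    refine opNorm_le_bound _ hδ0 fun w => ?_
    have h1 : ((V ∘L adjoint V - 1) w : H)
        = (E'.orthogonalProjectionOnto ((adjoint V w : H) - (w : H)) : H) := by
      simp [hV, map_sub, Submodule.orthogonalProjectionOnto_mem_subspace_eq_self]
    have h2 : ‖(V ∘L adjoint V - 1) w‖ = ‖((V ∘L adjoint V - 1) w : H)‖ := rfl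
    rw [h2, h1]
    calc ‖(E'.orthogonalProjectionOnto ((adjoint V w : H) - (w : H)) : H)‖
        ≤ ‖(adjoint V w : H) - (w : H)‖ := hPE' _
      _ ≤ δ * ‖w‖ := keyB w
  -- units
  have hu1 : ‖(1 : E →L[ℝ] E) - adjoint V ∘L V‖ < 1 := by
    have h := norm_sub_rev (adjoint V ∘L V) (1 : E →L[ℝ] E)
    linarith
  have hu2 : ‖(1 : E' →L[ℝ] E') - V ∘L adjoint V‖ < 1 := by
    have h := norm_sub_rev (V ∘L adjoint V) (1 : E' →L[ℝ] E')
    linarith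
  let u1 : (E →L[ℝ] E)ˣ := Units.oneSub (R := E →L[ℝ] E) _ hu1
  let u2 : (E' →L[ℝ] E')ˣ := Units.oneSub (R := E' →L[ℝ] E') _ hu2
  have hu1v : (u1 : E →L[ℝ] E) = adjoint V ∘L V := by
    show (1 : E →L[ℝ] E) - (1 - adjoint V ∘L V) = adjoint V ∘L V
    rw [sub_sub_cancel]
  have hu2v : (u2 : E' →L[ℝ] E') = V ∘L adjoint V := by
    show (1 : E' →L[ℝ] E') - (1 - V ∘L adjoint V) = V ∘L adjoint V
    rw [sub_sub_cancel]
  set L : E' →L[ℝ] E := (↑u1⁻¹ : E →L[ℝ] E) ∘L adjoint V with hL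
  set R : E' →L[ℝ] E := adjoint V ∘L (↑u2⁻¹ : E' →L[ℝ] E') with hR
  have hLV : L ∘L V = 1 := by
    rw [hL, comp_assoc, ← hu1v, ← mul_def]
    exact u1.inv_mul
  have hVR : V ∘L R = 1 := by
    rw [hR, ← comp_assoc, ← hu2v, ← mul_def]
    exact u2.mul_inv
  have hLR : L = R := by
    calc L = L ∘L (V ∘L R) := by rw [hVR, one_def, comp_id]
      _ = (L ∘L V) ∘L R := (comp_assoc _ _ _).symm
      _ = R := by rw [hLV, one_def, id_comp]
  have hVL : V ∘L L = 1 := by rw [hLR]; exact hVR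
  -- lower bound for V
  have hVlow : ∀ v : E, (1 - δ) * ‖v‖ ≤ ‖V v‖ := by
    intro v
    have h1 : ‖V v‖ = ‖(V v : H)‖ := rfl
    have h2 : ‖v‖ = ‖(v : H)‖ := rfl
    have h3 : ‖(v : H)‖ ≤ ‖(V v : H)‖ + ‖(V v : H) - (v : H)‖ := by
      have := norm_sub_le ((V v : H)) ((V v : H) - (v : H))
      simpa using this
    have h4 := keyA v
    have h5 : ‖v‖ = ‖(v : H)‖ := rfl
    rw [h5] at h4
    have e : (1 - δ) * ‖(v : H)‖ = ‖(v : H)‖ - δ * ‖(v : H)‖ := by ring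
    rw [h1, h2, e]
    linarith
  -- norm of L
  have hLnorm : ‖L‖ ≤ (1 - δ)⁻¹ := by
    have h1δ : (0:ℝ) < 1 - δ := by linarith
    refine opNorm_le_bound _ (inv_nonneg.mpr h1δ.le) fun w => ?_
    have h1 : V (L w) = w := ContinuousLinearMap.ext_iff.mp hVL w
    have h2 := hVlow (L w)
    rw [h1] at h2
    rw [inv_mul_eq_div, le_div_iff₀ (by linarith), mul_comm]
    linarith
  have hLlt : ‖L‖ < 1 + 2 * ε := by
    have h : (1 - δ)⁻¹ < 1 + 2 * ε := by
      have h4 : δ * (1 + 2 * ε) < ε * (1 + 2 * ε) :=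
        mul_lt_mul_of_pos_right hδε (by linarith)
      have h5 : ε * (2 * ε) < ε * 1 := mul_lt_mul_of_pos_left (by linarith) hε0
      have e1 : ε * (1 + 2 * ε) = ε + ε * (2 * ε) := by ring
      have e2 : (1 + 2 * ε) * (1 - δ) = 1 + 2 * ε - δ * (1 + 2 * ε) := by ring
      rw [inv_lt_iff_one_lt_mul₀ (by linarith)]
      linarith
    linarith
  -- bijectivity
  have hinj : Function.Injective V := by
    intro x y hxy
    have hx : L (V x) = x := ContinuousLinearMap.ext_iff.mp hLV x
    have hy : L (V y) = y := ContinuousLinearMap.ext_iff.mp hLV y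
    rw [← hx, ← hy, hxy]
  have hsurj : Function.Surjective V := fun w =>
    ⟨L w, ContinuousLinearMap.ext_iff.mp hVL w⟩
  exact ⟨⟨hinj, hsurj⟩, hVnorm, ⟨L, hLV, hVL, hLlt⟩,
    lt_of_le_of_lt hAA (by linarith), lt_of_le_of_lt hBB (by linarith)⟩
end

section
/- Let E, E', E'' be closed subspaces of a real Hilbert space with orthogonal projections Q, Q', Q'' satisfying ‖Q-Q'‖ < ε, ‖Q'-Q''‖ < ε, ‖Q''-Q‖ < ε for some ε < 1/2. Define V : E → E', V' : E' → E'', V'' : E'' → E by orthogonal projection. Then ‖V''((V')ᵀ)⁻¹ V - 1_E‖ < 5ε. -/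
open ContinuousLinearMap
set_option maxHeartbeats 1600000 in

/-- For three closed subspaces `E, E', E''` whose orthogonal projections are pairwise
`ε`-close (`ε < 1/2`), the compressions `V : E → E'`, `V' : E' → E''`, `V'' : E'' → E`
satisfy `‖V'' ((V')ᵀ)⁻¹ V - 1‖ < 5ε`. -/
theorem triple_projection_compression_estimate {H : Type*} [NormedAddCommGroup H]
    [InnerProductSpace ℝ H] [CompleteSpace H]
    (E E' E'' : Submodule ℝ H) [CompleteSpace E] [CompleteSpace E'] [CompleteSpace E'']
    (ε : ℝ) (hε : ε < 1 / 2)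
    (h1 : ‖(E.subtypeL ∘L E.orthogonalProjectionOnto : H →L[ℝ] H) -
      (E'.subtypeL ∘L E'.orthogonalProjectionOnto : H →L[ℝ] H)‖ < ε)
    (h2 : ‖(E'.subtypeL ∘L E'.orthogonalProjectionOnto : H →L[ℝ] H) -
      (E''.subtypeL ∘L E''.orthogonalProjectionOnto : H →L[ℝ] H)‖ < ε)
    (h3 : ‖(E''.subtypeL ∘L E''.orthogonalProjectionOnto : H →L[ℝ] H) -
      (E.subtypeL ∘L E.orthogonalProjectionOnto : H →L[ℝ] H)‖ < ε)
    (V : E →L[ℝ] E') (hV : V = E'.orthogonalProjectionOnto ∘L E.subtypeL)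
    (V' : E' →L[ℝ] E'') (hV' : V' = E''.orthogonalProjectionOnto ∘L E'.subtypeL)
    (V'' : E'' →L[ℝ] E) (hV'' : V'' = E.orthogonalProjectionOnto ∘L E''.subtypeL)
    -- `W` is the inverse of the adjoint `(V')ᵀ : E'' → E'`
    (W : E' →L[ℝ] E'') (hW1 : W ∘L adjoint V' = 1) (hW2 : adjoint V' ∘L W = 1) :
    ‖V'' ∘L W ∘L V - 1‖ < 5 * ε := by
  have hε0 : 0 < ε := lt_of_le_of_lt (norm_nonneg _) h1
  set Q : H →L[ℝ] H := (E.subtypeL ∘L E.orthogonalProjectionOnto : H →L[ℝ] H) with hQ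
  set Q' : H →L[ℝ] H := (E'.subtypeL ∘L E'.orthogonalProjectionOnto : H →L[ℝ] H) with hQ'
  set Q'' : H →L[ℝ] H := (E''.subtypeL ∘L E''.orthogonalProjectionOnto : H →L[ℝ] H) with hQ''
  have hA : adjoint V' = E'.orthogonalProjectionOnto ∘L E''.subtypeL := by
    rw [hV', adjoint_comp, Submodule.adjoint_subtypeL, Submodule.adjoint_orthogonalProjection]
  -- pointwise norms of projections
  have hproj : ∀ (K : Submodule ℝ H) [CompleteSpace K] (u : H),
      ‖(K.orthogonalProjectionOnto u : K)‖ ≤ ‖u‖ := by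
    intro K _ u
    calc ‖(K.orthogonalProjectionOnto u : K)‖ ≤ ‖(K.orthogonalProjectionOnto : H →L[ℝ] K)‖ * ‖u‖ :=
          le_opNorm _ u
      _ ≤ 1 * ‖u‖ :=
          mul_le_mul_of_nonneg_right (Submodule.orthogonalProjectionOnto_norm_le K) (norm_nonneg u)
      _ = ‖u‖ := one_mul ‖u‖
  -- Q'' fixes elements of E''
  have hfix : ∀ (K : Submodule ℝ H) [CompleteSpace K] (u : K),
      (K.subtypeL ∘L K.orthogonalProjectionOnto : H →L[ℝ] H) (u : H) = (u : H) := by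
    intro K _ u
    simp [Submodule.orthogonalProjectionOnto_mem_subspace_eq_self]
  -- lower bound for adjoint V'
  have hlow : ∀ z : E'', (1 - ε) * ‖z‖ ≤ ‖adjoint V' z‖ := by
    intro z
    have h1' : ‖((adjoint V' z : E') : H) - (z : H)‖ ≤ ε * ‖z‖ := by
      have : ((adjoint V' z : E') : H) - (z : H) = (Q' - Q'') (z : H) := by
        rw [hA]
        have := hfix E'' z
        simp only [ContinuousLinearMap.sub_apply]
        rw [this]
        rfl
      rw [this]
      calc ‖(Q' - Q'') (z : H)‖ ≤ ‖Q' - Q''‖ * ‖(z : H)‖ := le_opNorm _ _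
        _ ≤ ε * ‖z‖ := by
            have : ‖Q' - Q''‖ ≤ ε := le_of_lt h2
            exact mul_le_mul_of_nonneg_right this (norm_nonneg _)
    have h2' : ‖(z : H)‖ - ‖((adjoint V' z : E') : H)‖ ≤ ε * ‖z‖ := by
      calc ‖(z : H)‖ - ‖((adjoint V' z : E') : H)‖ ≤ ‖(z : H) - ((adjoint V' z : E') : H)‖ :=
            norm_sub_norm_le _ _
        _ = ‖((adjoint V' z : E') : H) - (z : H)‖ := norm_sub_rev _ _
        _ ≤ ε * ‖z‖ := h1'
    have hz : ‖(z : H)‖ = ‖z‖ := rfl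
    have hy : ‖((adjoint V' z : E') : H)‖ = ‖adjoint V' z‖ := rfl
    rw [hz, hy] at h2'
    linarith
  -- bound on W
  have hW : ∀ y : E', ‖W y‖ ≤ 2 * ‖y‖ := by
    intro y
    have := hlow (W y)
    have hy : adjoint V' (W y) = y := by
      have h := ContinuousLinearMap.ext_iff.mp hW2 y
      simpa only [ContinuousLinearMap.comp_apply, ContinuousLinearMap.one_apply] using h
    rw [hy] at this
    nlinarith [norm_nonneg (W y), norm_nonneg y]
  -- main pointwise estimate
  have hmain : ∀ x : E, ‖(V'' ∘L W ∘L V - 1) x‖ ≤ 3 * ε * ‖x‖ := by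
    intro x
    set s : E'' := E''.orthogonalProjectionOnto (x : H) with hs
    -- d = V x - adjoint V' s
    have hd : ‖V x - adjoint V' s‖ ≤ ε * ‖x‖ := by
      have heq : ((V x : E') : H) - ((adjoint V' s : E') : H) =
          ((E'.orthogonalProjectionOnto ((Q - Q'') (x : H)) : E') : H) := by
        rw [hV, hA]
        simp only [ContinuousLinearMap.sub_apply, map_sub]
        have hx : Q (x : H) = (x : H) := hfix E x
        rw [hx]
        rfl
      have : ‖V x - adjoint V' s‖ = ‖((V x : E') : H) - ((adjoint V' s : E') : H)‖ := rfl
      rw [this, heq]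
      calc ‖((E'.orthogonalProjectionOnto ((Q - Q'') (x : H)) : E') : H)‖
          ≤ ‖(Q - Q'') (x : H)‖ := hproj E' _
        _ ≤ ‖Q - Q''‖ * ‖(x : H)‖ := le_opNorm _ _
        _ ≤ ε * ‖x‖ := by
            have : ‖Q - Q''‖ ≤ ε := by
              rw [show Q - Q'' = -(Q'' - Q) from (neg_sub _ _).symm, norm_neg]
              exact le_of_lt h3
            exact mul_le_mul_of_nonneg_right this (norm_nonneg _)
    have he2 : ‖V'' s - x‖ ≤ ε * ‖x‖ := by
      have heq : ((V'' s : E) : H) - (x : H) =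
          ((E.orthogonalProjectionOnto ((Q'' - Q) (x : H)) : E) : H) := by
        rw [hV'']
        have h1x : (E.orthogonalProjectionOnto (Q (x : H)) : E) = x := by
          rw [hfix E x]
          exact Submodule.orthogonalProjectionOnto_mem_subspace_eq_self x
        simp only [ContinuousLinearMap.sub_apply, map_sub, h1x]
        rfl
      have : ‖V'' s - x‖ = ‖((V'' s : E) : H) - (x : H)‖ := rfl
      rw [this, heq]
      calc ‖((E.orthogonalProjectionOnto ((Q'' - Q) (x : H)) : E) : H)‖
          ≤ ‖(Q'' - Q) (x : H)‖ := hproj E _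
        _ ≤ ‖Q'' - Q‖ * ‖(x : H)‖ := le_opNorm _ _
        _ ≤ ε * ‖x‖ := mul_le_mul_of_nonneg_right (le_of_lt h3) (norm_nonneg _)
    -- decompose
    have hdecomp : (V'' ∘L W ∘L V - 1) x = V'' (W (V x - adjoint V' s)) + (V'' s - x) := by
      have hWA : W (adjoint V' s) = s := by
        have h := ContinuousLinearMap.ext_iff.mp hW1 s
        simpa only [ContinuousLinearMap.comp_apply, ContinuousLinearMap.one_apply] using h
      simp only [ContinuousLinearMap.sub_apply, ContinuousLinearMap.comp_apply,
        ContinuousLinearMap.one_apply, map_sub, hWA]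
      abel
    rw [hdecomp]
    have hVW : ‖V'' (W (V x - adjoint V' s))‖ ≤ 2 * ε * ‖x‖ := by
      have h1'' : ‖V'' (W (V x - adjoint V' s))‖ ≤ ‖W (V x - adjoint V' s)‖ := by
        rw [hV'']
        exact hproj E _
      have h2'' : ‖W (V x - adjoint V' s)‖ ≤ 2 * ‖V x - adjoint V' s‖ := hW _
      calc ‖V'' (W (V x - adjoint V' s))‖ ≤ 2 * ‖V x - adjoint V' s‖ := le_trans h1'' h2''
        _ ≤ 2 * (ε * ‖x‖) := by linarith
        _ = 2 * ε * ‖x‖ := by ring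
    calc ‖V'' (W (V x - adjoint V' s)) + (V'' s - x)‖
        ≤ ‖V'' (W (V x - adjoint V' s))‖ + ‖V'' s - x‖ := norm_add_le _ _
      _ ≤ 3 * ε * ‖x‖ := by linarith
  have : ‖V'' ∘L W ∘L V - 1‖ ≤ 3 * ε := by
    apply opNorm_le_bound _ (by linarith) hmain
  linarith
end

section
/- Let J₀ and J₁ be complex structures on a real Hilbert space such that the image of J₀ - J₁ in the Calkin algebra has norm at most c < 1. Then for t ∈ [0,1], T_t = (1-t)J₀ + tJ₁ is a skew-adjoint Fredholm operator, and moreover 0 ∈ σ(T_t) implies t = 1/2. -/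
open ContinuousLinearMap
open scoped RealInnerProductSpace

section aux
variable {H : Type*} [NormedAddCommGroup H] [InnerProductSpace ℝ H] [CompleteSpace H]

lemma cpt_mul_right (A B : H →L[ℝ] H) (h : IsCompactOperator ⇑B) :
    IsCompactOperator ⇑(A * B) := by
  exact h.clm_comp A

lemma cpt_mul_left (A B : H →L[ℝ] H) (h : IsCompactOperator ⇑A) :
    IsCompactOperator ⇑(A * B) := by
  exact h.comp_clm B

lemma cpt_smul (a : ℝ) (A : H →L[ℝ] H) (h : IsCompactOperator ⇑A) :
    IsCompactOperator ⇑(a • A) := by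
  exact h.smul a

end aux

set_option maxHeartbeats 1000000 in
set_option synthInstance.maxHeartbeats 1000000 in
/-- If two complex structures `J₀, J₁` on a real Hilbert space satisfy
`‖π(J₀) - π(J₁)‖ ≤ c < 1` in the Calkin algebra (phrased as: there is a compact `K`
with `‖J₀ - J₁ - K‖ ≤ c`), then each `T_t = (1-t)J₀ + tJ₁`, `t ∈ [0,1]`, is a
skew-adjoint Fredholm operator (invertible modulo compacts), and `0 ∈ σ(T_t)` forces
`t = 1/2`. -/
theorem linear_path_complexStructures_fredholm {H : Type*} [NormedAddCommGroup H]
    [InnerProductSpace ℝ H] [CompleteSpace H]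
    (J₀ J₁ : H →L[ℝ] H)
    (h0sq : J₀ * J₀ = -1) (h0sk : adjoint J₀ = -J₀)
    (h1sq : J₁ * J₁ = -1) (h1sk : adjoint J₁ = -J₁)
    (c : ℝ) (hc : c < 1)
    (hCalkin : ∃ K : H →L[ℝ] H, IsCompactOperator K ∧ ‖J₀ - J₁ - K‖ ≤ c)
    (t : ℝ) (ht0 : 0 ≤ t) (ht1 : t ≤ 1)
    (T : H →L[ℝ] H) (hT : T = (1 - t) • J₀ + t • J₁) :
    adjoint T = -T ∧
    (∃ S : H →L[ℝ] H, ∃ K₁ K₂ : H →L[ℝ] H, IsCompactOperator K₁ ∧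
      IsCompactOperator K₂ ∧ S * T = 1 + K₁ ∧ T * S = 1 + K₂) ∧
    ((0 : ℝ) ∈ spectrum ℝ T → t = 1 / 2) := by
  obtain ⟨K, hKcpt, hKnorm⟩ := hCalkin
  set D : H →L[ℝ] H := J₀ - J₁ with hD
  set a : ℝ := t * (1 - t) with ha
  -- key algebraic identity
  have h0 : ∀ x : H →L[ℝ] H, J₀ * (J₀ * x) = -x := by
    intro x; rw [← mul_assoc, h0sq, neg_one_mul]
  have h1 : ∀ x : H →L[ℝ] H, J₁ * (J₁ * x) = -x := by
    intro x; rw [← mul_assoc, h1sq, neg_one_mul]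
  have hTsq : T * T = -1 - a • (D * D) := by
    rw [hT, hD]
    simp only [add_mul, mul_add, sub_mul, mul_sub, smul_mul_assoc, mul_smul_comm,
      h0sq, h1sq, smul_smul]
    module
  have hComm : T * (D * D) = (D * D) * T := by
    rw [hT, hD]
    simp only [add_mul, mul_add, sub_mul, mul_sub, smul_mul_assoc, mul_smul_comm,
      mul_assoc, h0, h1, h0sq, h1sq, mul_neg, neg_mul, mul_one, one_mul, mul_neg_one, neg_one_mul, smul_neg]
    module
  have hTadj : adjoint T = -T := by
    rw [hT]
    simp only [map_add, map_smulₛₗ, starRingEnd_apply, star_trivial, h0sk, h1sk,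
      smul_neg]
    module
  refine ⟨hTadj, ?_, ?_⟩
  · -- Fredholm part
    set R : H →L[ℝ] H := D - K with hR
    have hRn : ‖R‖ ≤ c := hKnorm
    have hc0 : (0 : ℝ) ≤ c := le_trans (norm_nonneg R) hRn
    have ha0 : 0 ≤ a := mul_nonneg ht0 (by linarith)
    have ha4 : a ≤ 1 / 4 := by rw [ha]; nlinarith [sq_nonneg (1 - 2*t)]
    set Q : H →L[ℝ] H := D * K + K * D - K * K with hQ
    have hRRQ : D * D = R * R + Q := by rw [hR, hQ]; noncomm_ring
    have hQcpt : IsCompactOperator ⇑Q := by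
      exact ((cpt_mul_right D K hKcpt).add (cpt_mul_left K D hKcpt)).sub
        (cpt_mul_left K K hKcpt)
    have hsmall : ‖-(a • (R * R))‖ < 1 := by
      rw [norm_neg]
      refine lt_of_le_of_lt (norm_smul_le a (R * R)) ?_
      rw [Real.norm_eq_abs, abs_of_nonneg ha0]
      have h1' : ‖R * R‖ ≤ ‖R‖ * ‖R‖ := norm_mul_le R R
      nlinarith [norm_nonneg R, norm_nonneg (R * R)]
    set u : (H →L[ℝ] H)ˣ := Units.oneSub (-(a • (R * R))) hsmall with hu
    have huval : (u : H →L[ℝ] H) = 1 + a • (R * R) := by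
      rw [hu, Units.val_oneSub, sub_neg_eq_add]
    set V : H →L[ℝ] H := ↑u⁻¹ with hV
    have hVu : V * ↑u = 1 := u.inv_mul
    have huV : (↑u : H →L[ℝ] H) * V = 1 := u.mul_inv
    have hA : -(T * T) = ↑u + a • Q := by
      rw [hTsq, huval, hRRQ, smul_add]; abel
    set M : H →L[ℝ] H := T * Q - Q * T with hM
    have hMcpt : IsCompactOperator ⇑M :=
      (cpt_mul_right T Q hQcpt).sub (cpt_mul_left Q T hQcpt)
    have hTu : (↑u : H →L[ℝ] H) * T = T * ↑u + a • M := by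
      rw [huval, hM]
      have hRR' : R * R = D * D - Q := by rw [hRRQ]; abel
      rw [hRR']
      simp only [add_mul, mul_add, one_mul, mul_one, smul_mul_assoc, mul_smul_comm,
        mul_sub, sub_mul, hComm, smul_sub]
      abel
    have hTV : T * V = V * T + a • (V * (M * V)) := by
      have e1 : T * V = V * ((↑u : H →L[ℝ] H) * (T * V)) := by
        rw [← mul_assoc, hVu, one_mul]
      rw [e1, ← mul_assoc (↑u : H →L[ℝ] H) T V, hTu]
      rw [add_mul, smul_mul_assoc, mul_assoc T (↑u : H →L[ℝ] H) V, huV, mul_one]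
      rw [mul_add, mul_smul_comm]
    refine ⟨-(V * T), a • (V * Q), a • (V * Q) - a • (V * (M * (V * T))), ?_, ?_, ?_, ?_⟩
    · exact cpt_smul a _ (cpt_mul_right V Q hQcpt)
    · exact (cpt_smul a _ (cpt_mul_right V Q hQcpt)).sub
        (cpt_smul a _ (cpt_mul_right V _ (cpt_mul_left M _ hMcpt)))
    · rw [neg_mul, mul_assoc, ← mul_neg, hA, mul_add, hVu, mul_smul_comm]
    · rw [mul_neg, ← mul_assoc, hTV, add_mul, smul_mul_assoc, mul_assoc V T T, neg_add,
        ← mul_neg V (T * T), hA, mul_add, hVu, mul_smul_comm, mul_assoc V (M * V) T,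
        mul_assoc M V T]
      abel
  · -- spectrum part
    intro hspec
    by_contra hne
    have habs : 0 < |1 - 2*t| := abs_pos.mpr (by intro h'; apply hne; linarith)
    -- isometry of J₀, J₁
    have e0 : ∀ v : H, ‖J₀ v‖ = ‖v‖ := by
      intro v
      have h := adjoint_inner_right J₀ v (J₀ v)
      rw [h0sk] at h
      have hsq : J₀ (J₀ v) = -v := by
        have := congrFun (congrArg (DFunLike.coe) h0sq) v
        simpa [ContinuousLinearMap.mul_apply] using this
      rw [ContinuousLinearMap.neg_apply, hsq] at h
      simp only [neg_neg] at h
      rw [norm_eq_sqrt_real_inner, norm_eq_sqrt_real_inner v, ← h]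
    have e1 : ∀ v : H, ‖J₁ v‖ = ‖v‖ := by
      intro v
      have h := adjoint_inner_right J₁ v (J₁ v)
      rw [h1sk] at h
      have hsq : J₁ (J₁ v) = -v := by
        have := congrFun (congrArg (DFunLike.coe) h1sq) v
        simpa [ContinuousLinearMap.mul_apply] using this
      rw [ContinuousLinearMap.neg_apply, hsq] at h
      simp only [neg_neg] at h
      rw [norm_eq_sqrt_real_inner, norm_eq_sqrt_real_inner v, ← h]
    have hD2 : ∀ v : H, ‖D v‖ ≤ 2 * ‖v‖ := by
      intro v
      have : D v = J₀ v - J₁ v := by rw [hD]; simp [ContinuousLinearMap.sub_apply]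
      rw [this]
      calc ‖J₀ v - J₁ v‖ ≤ ‖J₀ v‖ + ‖J₁ v‖ := norm_sub_le _ _
        _ = 2 * ‖v‖ := by rw [e0 v, e1 v]; ring
    have hDadj : adjoint D = -D := by rw [hD, map_sub, h0sk, h1sk]; abel
    have hbound : ∀ v : H, ‖T v‖^2 = ‖v‖^2 - a * ‖D v‖^2 := by
      intro v
      have hTT : (inner ℝ (T (T v)) v : ℝ) = -(‖T v‖^2) := by
        have h := adjoint_inner_left T v (T v)
        rw [hTadj, ContinuousLinearMap.neg_apply, inner_neg_left, neg_eq_iff_eq_neg] at h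
        rw [h, real_inner_self_eq_norm_sq]
      have hDD : (inner ℝ (D (D v)) v : ℝ) = -(‖D v‖^2) := by
        have h := adjoint_inner_left D v (D v)
        rw [hDadj, ContinuousLinearMap.neg_apply, inner_neg_left, neg_eq_iff_eq_neg] at h
        rw [h, real_inner_self_eq_norm_sq]
      have happ : T (T v) = -v - a • (D (D v)) := by
        have := congrFun (congrArg (DFunLike.coe) hTsq) v
        simpa [ContinuousLinearMap.mul_apply, ContinuousLinearMap.sub_apply,
          ContinuousLinearMap.smul_apply, ContinuousLinearMap.neg_apply,
          ContinuousLinearMap.one_apply] using this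
      have hexp : (inner ℝ (T (T v)) v : ℝ) = -(‖v‖^2) - a * (inner ℝ (D (D v)) v : ℝ) := by
        rw [happ, inner_sub_left, inner_neg_left, real_inner_smul_left,
          real_inner_self_eq_norm_sq]
      rw [hTT, hDD] at hexp
      linarith
    have hlow : ∀ v : H, |1 - 2*t| * ‖v‖ ≤ ‖T v‖ := by
      intro v
      have h2 := hbound v
      have h3 := hD2 v
      have key : (1 - 2*t)^2 * ‖v‖^2 ≤ ‖T v‖^2 := by
        have ha0' : 0 ≤ a := by rw [ha]; nlinarith
        have h4 : ‖D v‖^2 ≤ 4 * ‖v‖^2 := by nlinarith [norm_nonneg (D v), norm_nonneg v]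
        have h5 : a * ‖D v‖^2 ≤ a * (4 * ‖v‖^2) := mul_le_mul_of_nonneg_left h4 ha0'
        have h6 : (1 - 2*t)^2 = 1 - 4*a := by rw [ha]; ring
        rw [h2, h6]
        nlinarith [h5]
      nlinarith [key, norm_nonneg (T v), mul_nonneg (abs_nonneg (1 - 2*t)) (norm_nonneg v),
        sq_abs (1 - 2*t)]
    have hinj0 : ∀ v : H, T v = 0 → v = 0 := by
      intro v hv
      have := hlow v
      rw [hv, norm_zero] at this
      have hn : ‖v‖ = 0 := le_antisymm (nonpos_of_mul_nonpos_right ?_ habs) (norm_nonneg v)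
      · exact norm_eq_zero.mp hn
      · nlinarith [this, norm_nonneg v]
    have hinj : Function.Injective ⇑T := by
      intro x y hxy
      have : T (x - y) = 0 := by rw [map_sub, hxy, sub_self]
      have := hinj0 _ this
      exact sub_eq_zero.mp this
    have hanti : AntilipschitzWith ⟨|1 - 2*t|⁻¹, inv_nonneg.mpr (abs_nonneg _)⟩ ⇑T := by
      refine AddMonoidHomClass.antilipschitz_of_bound T fun v => ?_
      have h := hlow v
      push_cast
      calc ‖v‖ = |1 - 2*t|⁻¹ * (|1 - 2*t| * ‖v‖) := by field_simp
        _ ≤ |1 - 2*t|⁻¹ * ‖T v‖ :=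
          mul_le_mul_of_nonneg_left h (inv_nonneg.mpr (abs_nonneg _))
    have hclosed : IsClosed (Set.range ⇑T) := hanti.isClosed_range T.uniformContinuous
    have hcl2 : IsClosed ((LinearMap.range (T : H →ₗ[ℝ] H) : Submodule ℝ H) : Set H) := by
      rwa [LinearMap.coe_range]
    haveI : CompleteSpace (LinearMap.range (T : H →ₗ[ℝ] H)) := hcl2.completeSpace_coe
    have horth : (LinearMap.range (T : H →ₗ[ℝ] H))ᗮ = ⊥ := by
      rw [Submodule.eq_bot_iff]
      intro v hv
      rw [Submodule.mem_orthogonal] at hv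
      have hadj : adjoint T v = 0 := by
        have h := hv (T (adjoint T v)) (LinearMap.mem_range.mpr ⟨adjoint T v, rfl⟩)
        rw [← adjoint_inner_right T (adjoint T v) v] at h
        exact inner_self_eq_zero.mp h
      rw [hTadj, ContinuousLinearMap.neg_apply, neg_eq_zero] at hadj
      exact hinj0 v hadj
    have htop : LinearMap.range (T : H →ₗ[ℝ] H) = ⊤ := Submodule.orthogonal_eq_bot_iff.mp horth
    have hbij : Function.Bijective ⇑T := ⟨hinj, LinearMap.range_eq_top.mp htop⟩
    exact (spectrum.zero_mem_iff ℝ).mp hspec ((ContinuousLinearMap.isUnit_iff_bijective).mpr hbij)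
end
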